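/- Let P ≻ 0, R ≻ 0, Q ⪰ 0, σ > 0, γ > 0, α > 0. Suppose u ∈ ℝᵃ satisfies uᵀ(σR)u + 2(BᵀPx)ᵀu + xᵀ(PA + AᵀP + αP + σQ + PGGᵀP/(σγ²))x ≤ 0. Then with V(x) = xᵀPx and any w ∈ ℝᵈ, taking ẋ = Ax + Bu + Gw, the quantity E = 2xᵀPẋ + αV(x) + σ(xᵀQx + uᵀRu - γ²‖w‖₂²) satisfies E ≤ 0. -/

import Mathlib

open Matrix

noncomputable def norm2 {n : ℕ} (v : Fin n → ℝ) : ℝ := Real.sqrt (v ⬝ᵥ v)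

theorem hinf_safe_set_correct {s a d : ℕ}
    (A : Matrix (Fin s) (Fin s) ℝ) (B : Matrix (Fin s) (Fin a) ℝ)
    (G : Matrix (Fin s) (Fin d) ℝ)
    (P Q : Matrix (Fin s) (Fin s) ℝ) (R : Matrix (Fin a) (Fin a) ℝ)
    (hP : P.PosDef) (hR : R.PosDef) (hQ : Q.PosSemidef)
    (σ γ α : ℝ) (hσ : 0 < σ) (hγ : 0 < γ) (hα : 0 < α)
    (x : Fin s → ℝ) (u : Fin a → ℝ)
    (hu : u ⬝ᵥ ((σ • R) *ᵥ u) + 2 * ((Bᵀ *ᵥ (P *ᵥ x)) ⬝ᵥ u)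
        + x ⬝ᵥ ((P * A + Aᵀ * P + α • P + σ • Q + (σ * γ ^ 2)⁻¹ • (P * G * Gᵀ * P)) *ᵥ x) ≤ 0) :
    ∀ w : Fin d → ℝ,
      2 * (x ⬝ᵥ (P *ᵥ (A *ᵥ x + B *ᵥ u + G *ᵥ w))) + α * (x ⬝ᵥ (P *ᵥ x))
        + σ * (x ⬝ᵥ (Q *ᵥ x) + u ⬝ᵥ (R *ᵥ u) - γ ^ 2 * (w ⬝ᵥ w)) ≤ 0 := by
  intro w
  have hPsymm : Pᵀ = P := hP.isHermitian.eq
  set v : Fin d → ℝ := Gᵀ *ᵥ (P *ᵥ x) with hv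
  set c : ℝ := σ * γ ^ 2 with hc
  have hcpos : 0 < c := by positivity
  -- key dot product identities
  have hPx : ∀ y : Fin s → ℝ, x ⬝ᵥ (P *ᵥ y) = (P *ᵥ x) ⬝ᵥ y := by
    intro y
    rw [dotProduct_mulVec, ← mulVec_transpose, hPsymm]
  have h1 : x ⬝ᵥ (P *ᵥ (G *ᵥ w)) = v ⬝ᵥ w := by
    rw [hPx, dotProduct_mulVec, ← mulVec_transpose, hv]
  have h2 : x ⬝ᵥ ((P * G * Gᵀ * P) *ᵥ x) = v ⬝ᵥ v := by
    rw [show P * G * Gᵀ * P = P * (G * (Gᵀ * P)) by rw [Matrix.mul_assoc, Matrix.mul_assoc], ← mulVec_mulVec, hPx,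
      ← mulVec_mulVec, dotProduct_mulVec, ← mulVec_transpose, ← mulVec_mulVec, hv]
  have h3 : x ⬝ᵥ ((Aᵀ * P) *ᵥ x) = x ⬝ᵥ (P *ᵥ (A *ᵥ x)) := by
    rw [← mulVec_mulVec, dotProduct_mulVec, ← mulVec_transpose, hPx, transpose_transpose, dotProduct_comm]
  have h4 : (Bᵀ *ᵥ (P *ᵥ x)) ⬝ᵥ u = x ⬝ᵥ (P *ᵥ (B *ᵥ u)) := by
    rw [hPx, dotProduct_mulVec, ← mulVec_transpose]
  -- nonnegativity of completed square
  have hsq : 0 ≤ c * ((w - c⁻¹ • v) ⬝ᵥ (w - c⁻¹ • v)) := by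
    apply mul_nonneg hcpos.le (by simpa using dotProduct_star_self_nonneg (w - c⁻¹ • v))
  have hexp : c * ((w - c⁻¹ • v) ⬝ᵥ (w - c⁻¹ • v))
      = c * (w ⬝ᵥ w) - 2 * (v ⬝ᵥ w) + c⁻¹ * (v ⬝ᵥ v) := by
    have hvw : v ⬝ᵥ w = w ⬝ᵥ v := dotProduct_comm _ _
    rw [sub_dotProduct, dotProduct_sub, dotProduct_sub, smul_dotProduct,
      dotProduct_smul, dotProduct_smul]
    field_simp
    ring_nf
    rw [hvw]
    rw [smul_dotProduct, smul_eq_mul]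
    have hcc : c * c⁻¹ = 1 := mul_inv_cancel₀ hcpos.ne'
    linear_combination (-2 * c * (w ⬝ᵥ v) + (c * c⁻¹ + 1) * (v ⬝ᵥ v)) * hcc
  have hge : 0 ≤ c * (w ⬝ᵥ w) - 2 * (v ⬝ᵥ w) + c⁻¹ * (v ⬝ᵥ v) := hexp ▸ hsq
  have h0 : x ⬝ᵥ ((P * A) *ᵥ x) = x ⬝ᵥ (P *ᵥ (A *ᵥ x)) := by
    rw [← mulVec_mulVec]
  have hu' : σ * (u ⬝ᵥ (R *ᵥ u)) + 2 * (x ⬝ᵥ (P *ᵥ (B *ᵥ u)))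
      + 2 * (x ⬝ᵥ (P *ᵥ (A *ᵥ x))) + α * (x ⬝ᵥ (P *ᵥ x)) + σ * (x ⬝ᵥ (Q *ᵥ x))
      + c⁻¹ * (v ⬝ᵥ v) ≤ 0 := by
    simp only [add_mulVec, smul_mulVec, dotProduct_add, dotProduct_smul,
      smul_eq_mul, h0, h2, h3, h4, ← hc] at hu
    linarith
  simp only [mulVec_add, dotProduct_add, h1]
  have hww : σ * γ ^ 2 * (w ⬝ᵥ w) = c * (w ⬝ᵥ w) := by rw [hc]
  nlinarith [hge, hu']
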